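/- Let A^{(n)}_{j} (0 ≤ j ≤ n−1, 1 ≤ n ≤ N) be discrete kernels satisfying assumption A1 (monotone and positive). Then the complementary kernels P^{(n)}_{n−j} defined by the recursion are well defined, nonnegative, and satisfy the identity Σ_{j=k}^{n} P^{(n)}_{n−j} A^{(j)}_{j−k} = 1 for all 1 ≤ k ≤ n ≤ N. -/

import Mathlib

open Real Finset

theorem complementary_kernel_nonneg_and_identity
    (N : ℕ) (hN : 1 ≤ N)
    (A : ℕ → ℕ → ℝ)
    -- assumption A1: the kernel is positive and decreasing in its lower index
    (hA1 : ∀ n k, 2 ≤ k → k ≤ n → n ≤ N → A n (k - 2) ≥ A n (k - 1) ∧ 0 < A n (k - 1))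
    (hApos : ∀ n, 1 ≤ n → n ≤ N → 0 < A n 0)
    -- the complementary kernel `P n j = P^{(n)}_{n-j}`, defined by the recursion
    (P : ℕ → ℕ → ℝ)
    (hPdiag : ∀ n, 1 ≤ n → n ≤ N → P n n = 1 / A n 0)
    (hPrec : ∀ n j, 1 ≤ j → j + 1 ≤ n → n ≤ N →
      P n j = (1 / A j 0) *
        ∑ k ∈ Finset.Icc (j + 1) n, (A k (k - j - 1) - A k (k - j)) * P n k) :
    (∀ n j, 1 ≤ j → j ≤ n → n ≤ N → 0 ≤ P n j) ∧
    (∀ n k, 1 ≤ k → k ≤ n → n ≤ N → ∑ j ∈ Finset.Icc k n, P n j * A j (j - k) = 1) := by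
  have hnonneg : ∀ n j, 1 ≤ j → j ≤ n → n ≤ N → 0 ≤ P n j := by
    intro n j hj1 hjn hn
    have key : ∀ d j, 1 ≤ j → j ≤ n → n - j = d → 0 ≤ P n j := by
      intro d
      induction d using Nat.strong_induction_on with
      | _ d ih =>
        intro j hj1 hjn hd
        rcases eq_or_lt_of_le hjn with heq | hlt
        · subst heq
          rw [hPdiag j hj1 hn]
          have := hApos j hj1 hn
          positivity
        · rw [hPrec n j hj1 hlt hn]
          have hAj := hApos j hj1 (le_trans hjn hn)
          apply mul_nonneg (by positivity)
          apply Finset.sum_nonneg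
          intro k hk
          rw [Finset.mem_Icc] at hk
          have h1 := hA1 k (k - j + 1) (by omega) (by omega) (le_trans hk.2 hn)
          have e1 : k - j + 1 - 2 = k - j - 1 := by omega
          have e2 : k - j + 1 - 1 = k - j := by omega
          rw [e1, e2] at h1
          have hPk : 0 ≤ P n k := ih (n - k) (by omega) k (by omega) hk.2 rfl
          have : 0 ≤ A k (k - j - 1) - A k (k - j) := by linarith [h1.1]
          exact mul_nonneg this hPk
    exact key (n - j) j hj1 hjn rfl
  refine ⟨hnonneg, ?_⟩
  intro n k hk1 hkn hn
  have key : ∀ d k, 1 ≤ k → k ≤ n → n - k = d →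
      ∑ j ∈ Finset.Icc k n, P n j * A j (j - k) = 1 := by
    intro d
    induction d using Nat.strong_induction_on with
    | _ d ih =>
      intro k hk1 hkn hd
      rcases eq_or_lt_of_le hkn with heq | hlt
      · subst heq
        rw [Finset.Icc_self, Finset.sum_singleton, hPdiag k hk1 hn]
        have := hApos k hk1 hn
        rw [Nat.sub_self]
        field_simp
      · have hsplit : Finset.Icc k n = insert k (Finset.Icc (k + 1) n) := by
          ext x; simp [Finset.mem_Icc]; omega
        rw [hsplit, Finset.sum_insert (by simp [Finset.mem_Icc])]
        have hAk := hApos k hk1 (le_trans hkn hn)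
        have hPk := hPrec n k hk1 hlt hn
        have hfk : P n k * A k (k - k) =
            ∑ j ∈ Finset.Icc (k + 1) n, (A j (j - k - 1) - A j (j - k)) * P n j := by
          rw [Nat.sub_self, hPk]
          field_simp
        rw [hfk, ← Finset.sum_add_distrib]
        have : ∀ j ∈ Finset.Icc (k + 1) n,
            (A j (j - k - 1) - A j (j - k)) * P n j + P n j * A j (j - k)
              = P n j * A j (j - (k + 1)) := by
          intro j hj
          rw [Finset.mem_Icc] at hj
          have : j - (k + 1) = j - k - 1 := by omega
          rw [this]; ring
        rw [Finset.sum_congr rfl this]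
        exact ih (n - (k + 1)) (by omega) (k + 1) (by omega) (by omega) rfl
  exact key (n - k) k hk1 hkn rfl
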